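/- Let M, Q, J, R be real n×n matrices and G a real n×m matrix, where M is symmetric positive definite, Q is symmetric, M and Q commute (so QM is symmetric), J is skew-symmetric, and R is symmetric. Let U : ℝ → ℝᵐ be continuous and let X : ℝ → ℝⁿ be differentiable with M X'(t) = (J - R) Q X(t) + G U(t) for all t. Then the discrete Hamiltonian Ĥ(t) = ½ X(t)ᵀ Q M X(t) satisfies dĤ/dt = -(Q X(t))ᵀ R (Q X(t)) + Y(t)ᵀ U(t), where Y(t) = Gᵀ Q X(t) is the power-conjugated output. -/

import Mathlib

open Matrix

private lemma symm_dot_swap {n : ℕ} {A : Matrix (Fin n) (Fin n) ℝ} (hA : Aᵀ = A)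
    (v w : Fin n → ℝ) : v ⬝ᵥ A.mulVec w = A.mulVec v ⬝ᵥ w := by
  rw [Matrix.dotProduct_mulVec, ← Matrix.vecMul_transpose, hA]

private lemma quad_hasDerivAt {n : ℕ} (A : Matrix (Fin n) (Fin n) ℝ) (hA : Aᵀ = A)
    {X : ℝ → Fin n → ℝ} {X' : Fin n → ℝ} {t : ℝ} (h : HasDerivAt X X' t) :
    HasDerivAt (fun s => (1/2) * (X s ⬝ᵥ A.mulVec (X s))) (X' ⬝ᵥ A.mulVec (X t)) t := by
  have hXi : ∀ i, HasDerivAt (fun s => X s i) (X' i) t := hasDerivAt_pi.mp h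
  have hAXi : ∀ i, HasDerivAt (fun s => A.mulVec (X s) i) (A.mulVec X' i) t := by
    intro i
    simp only [Matrix.mulVec, dotProduct]
    exact HasDerivAt.fun_sum fun j _ => (hXi j).const_mul (A i j)
  have h1 : HasDerivAt (fun s => X s ⬝ᵥ A.mulVec (X s))
      (X' ⬝ᵥ A.mulVec (X t) + X t ⬝ᵥ A.mulVec X') t := by
    have := HasDerivAt.fun_sum (u := Finset.univ)
      (fun i _ => ((hXi i).mul (hAXi i)))
    simpa [dotProduct, Finset.sum_add_distrib] using this
  have hsw : X t ⬝ᵥ A.mulVec X' = X' ⬝ᵥ A.mulVec (X t) := by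
    rw [symm_dot_swap hA, dotProduct_comm]
  have h2 := h1.const_mul (1/2 : ℝ)
  rw [hsw] at h2
  exact h2.congr_deriv (by ring)

theorem discrete_pH_power_balance
    {n m : ℕ} (M Q J R : Matrix (Fin n) (Fin n) ℝ) (G : Matrix (Fin n) (Fin m) ℝ)
    (hM : M.PosDef) (hQ : Q.IsSymm) (hMQ : M * Q = Q * M)
    (hJ : Jᵀ = -J) (hR : R.IsSymm)
    (U : ℝ → Fin m → ℝ) (hU : Continuous U)
    (X : ℝ → Fin n → ℝ) (hX : Differentiable ℝ X)
    (hode : ∀ t, M.mulVec (deriv X t)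
      = (J - R).mulVec (Q.mulVec (X t)) + G.mulVec (U t)) :
    ∀ t, HasDerivAt (fun s => (1/2) * (X s ⬝ᵥ (Q * M).mulVec (X s)))
      (-(Q.mulVec (X t) ⬝ᵥ R.mulVec (Q.mulVec (X t)))
        + (Gᵀ.mulVec (Q.mulVec (X t)) ⬝ᵥ U t)) t := by
  intro t
  have hMs : Mᵀ = M := by
    have := hM.isHermitian.eq
    rwa [Matrix.conjTranspose_eq_transpose_of_trivial] at this
  have hQM : (Q * M)ᵀ = Q * M := by
    rw [Matrix.transpose_mul, hMs, hQ.eq, hMQ]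
  have hder := quad_hasDerivAt (Q * M) hQM ((hX t).hasDerivAt)
  convert hder using 1
  set x := X t
  set x' := deriv X t
  set u := U t
  set qx := Q.mulVec x with hqx
  have key : x' ⬝ᵥ (Q * M).mulVec x = M.mulVec x' ⬝ᵥ qx := by
    rw [← hMQ, ← Matrix.mulVec_mulVec, symm_dot_swap hMs]
  rw [key, hode t]
  have hJzero : J.mulVec qx ⬝ᵥ qx = 0 := by
    have h1 : J.mulVec qx ⬝ᵥ qx = -(J.mulVec qx ⬝ᵥ qx) := by
      calc J *ᵥ qx ⬝ᵥ qx = qx ᵥ* Jᵀ ⬝ᵥ qx := by rw [Matrix.vecMul_transpose]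
        _ = -(qx ᵥ* J ⬝ᵥ qx) := by rw [hJ, Matrix.vecMul_neg, neg_dotProduct]
        _ = -(J *ᵥ qx ⬝ᵥ qx) := by rw [← Matrix.dotProduct_mulVec, dotProduct_comm]
    linarith
  have hGu : G.mulVec u ⬝ᵥ qx = Gᵀ.mulVec qx ⬝ᵥ u := by
    rw [dotProduct_comm, Matrix.dotProduct_mulVec, Matrix.mulVec_transpose]
  have hRs : R.mulVec qx ⬝ᵥ qx = qx ⬝ᵥ R.mulVec qx := dotProduct_comm _ _
  rw [add_dotProduct, Matrix.sub_mulVec, sub_dotProduct, hJzero, hGu, hRs]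
  ring
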